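/- Let A = diag(λ₁,…,λ_d) with all |λᵢ| = 1, x, y ∈ ℂ^d, and suppose {Aⁿ : n ∈ ℕ} is dense in the group T_A (as above). If P ⊆ ℂ^d is semialgebraic (viewing ℂ^d as ℝ^{2d}), AP ⊆ P, x ∈ P, and y ∉ P, then the closure of the orbit {Aⁿx : n ∈ ℕ} is contained in P, and in particular y is not in the closure of the orbit. -/

import Mathlib

section Cons
variable {X : Type*} [TopologicalSpace X]

/-- Locally closed sets. -/
def MyLC (S : Set X) : Prop := ∃ U Z : Set X, IsOpen U ∧ IsClosed Z ∧ S = U ∩ Z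

/-- Constructible sets: finite unions of locally closed sets. -/
def MyCons (S : Set X) : Prop :=
  ∃ 𝒮 : Set (Set X), 𝒮.Finite ∧ (∀ s ∈ 𝒮, MyLC s) ∧ S = ⋃₀ 𝒮

lemma MyLC.of_isOpen {U : Set X} (h : IsOpen U) : MyLC U :=
  ⟨U, Set.univ, h, isClosed_univ, (Set.inter_univ U).symm⟩

lemma MyLC.of_isClosed {Z : Set X} (h : IsClosed Z) : MyLC Z :=
  ⟨Set.univ, Z, isOpen_univ, h, (Set.univ_inter Z).symm⟩

lemma MyLC.inter {S T : Set X} (hS : MyLC S) (hT : MyLC T) : MyLC (S ∩ T) := by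
  obtain ⟨U, Z, hU, hZ, rfl⟩ := hS
  obtain ⟨V, W, hV, hW, rfl⟩ := hT
  exact ⟨U ∩ V, Z ∩ W, hU.inter hV, hZ.inter hW, by ext a; simp; tauto⟩

lemma MyLC.myCons {S : Set X} (h : MyLC S) : MyCons S :=
  ⟨{S}, Set.finite_singleton S, by simpa, by simp⟩

lemma MyCons.union {S T : Set X} (hS : MyCons S) (hT : MyCons T) : MyCons (S ∪ T) := by
  obtain ⟨𝒮, h𝒮f, h𝒮, rfl⟩ := hS
  obtain ⟨𝒯, h𝒯f, h𝒯, rfl⟩ := hT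
  refine ⟨𝒮 ∪ 𝒯, h𝒮f.union h𝒯f, ?_, by rw [Set.sUnion_union]⟩
  rintro s (hs | hs)
  exacts [h𝒮 s hs, h𝒯 s hs]

lemma MyCons.inter {S T : Set X} (hS : MyCons S) (hT : MyCons T) : MyCons (S ∩ T) := by
  obtain ⟨𝒮, h𝒮f, h𝒮, rfl⟩ := hS
  obtain ⟨𝒯, h𝒯f, h𝒯, rfl⟩ := hT
  refine ⟨Set.image2 (· ∩ ·) 𝒮 𝒯, h𝒮f.image2 _ h𝒯f, ?_, ?_⟩
  · rintro s ⟨a, ha, b, hb, rfl⟩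
    exact (h𝒮 a ha).inter (h𝒯 b hb)
  · ext p
    simp only [Set.mem_inter_iff, Set.mem_sUnion, Set.mem_image2]
    constructor
    · rintro ⟨⟨a, ha, hpa⟩, ⟨b, hb, hpb⟩⟩
      exact ⟨a ∩ b, ⟨a, ha, b, hb, rfl⟩, hpa, hpb⟩
    · rintro ⟨t, ⟨a, ha, b, hb, rfl⟩, hpa, hpb⟩
      exact ⟨⟨a, ha, hpa⟩, ⟨b, hb, hpb⟩⟩

lemma MyCons.compl {S : Set X} (hS : MyCons S) : MyCons Sᶜ := by
  obtain ⟨𝒮, h𝒮f, h𝒮, rfl⟩ := hS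
  revert h𝒮
  refine Set.Finite.induction_on (motive := fun t _ => (∀ s ∈ t, MyLC s) → MyCons (⋃₀ t)ᶜ)
    𝒮 h𝒮f ?_ ?_
  · intro _; simpa using MyLC.myCons (MyLC.of_isOpen isOpen_univ)
  · intro a s ha hs ih h𝒮
    have hIH := ih fun t ht => h𝒮 t (Set.mem_insert_of_mem a ht)
    obtain ⟨U, Z, hU, hZ, hLC⟩ := h𝒮 a (Set.mem_insert a s)
    have : (⋃₀ insert a s)ᶜ = aᶜ ∩ (⋃₀ s)ᶜ := by
      rw [Set.sUnion_insert, Set.compl_union]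
    rw [this]
    refine MyCons.inter ?_ hIH
    have : aᶜ = Uᶜ ∪ Zᶜ := by rw [hLC, Set.compl_inter]
    rw [this]
    exact (MyLC.of_isClosed hU.isClosed_compl).myCons.union
      (MyLC.of_isOpen hZ.isOpen_compl).myCons

/-- A nonempty constructible set contains a nonempty relatively open subset of its closure. -/
lemma MyCons.exists_open {F : Set X} (hF : MyCons F) (hne : F.Nonempty) :
    ∃ U : Set X, IsOpen U ∧ (U ∩ closure F).Nonempty ∧ U ∩ closure F ⊆ F := by
  obtain ⟨𝒮, h𝒮f, h𝒮, rfl⟩ := hF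
  revert h𝒮 hne
  refine Set.Finite.induction_on
    (motive := fun t _ => (∀ s ∈ t, MyLC s) → (⋃₀ t).Nonempty →
      ∃ U : Set X, IsOpen U ∧ (U ∩ closure (⋃₀ t)).Nonempty ∧ U ∩ closure (⋃₀ t) ⊆ ⋃₀ t)
    𝒮 h𝒮f ?_ ?_
  · intro _ hne; simp at hne
  · intro L s hL hs ih h𝒮 hne
    rw [Set.sUnion_insert] at hne ⊢
    set G := ⋃₀ s with hG
    by_cases hsub : closure (L ∪ G) ⊆ closure G
    · have hGF : closure G = closure (L ∪ G) :=
        Set.Subset.antisymm (closure_mono Set.subset_union_right) hsub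
      have hGne : G.Nonempty := by
        rw [← closure_nonempty_iff, hGF, closure_nonempty_iff]; exact hne
      obtain ⟨U, hU, hUne, hUsub⟩ := ih (fun t ht => h𝒮 t (Set.mem_insert_of_mem L ht)) hGne
      rw [hGF] at hUne hUsub
      exact ⟨U, hU, hUne, fun q hq => Set.subset_union_right (hUsub hq)⟩
    · obtain ⟨w, hwF, hwG⟩ := Set.not_subset.mp hsub
      obtain ⟨V, Z, hV, hZ, hLVZ⟩ := h𝒮 L (Set.mem_insert L s)
      have hwL : w ∈ closure L := by
        rw [closure_union] at hwF
        exact hwF.resolve_right hwG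
      refine ⟨V ∩ (closure G)ᶜ, hV.inter isClosed_closure.isOpen_compl, ?_, ?_⟩
      · obtain ⟨p, hp1, hp2⟩ :=
          (mem_closure_iff.mp hwL) (closure G)ᶜ isClosed_closure.isOpen_compl hwG
        have hpV : p ∈ V := by rw [hLVZ] at hp2; exact hp2.1
        exact ⟨p, ⟨hpV, hp1⟩, subset_closure (Set.mem_union_left _ hp2)⟩
      · rintro q ⟨⟨hqV, hqG⟩, hqF⟩
        rw [closure_union] at hqF
        have hqL : q ∈ closure L := hqF.resolve_right hqG
        have hqZ : q ∈ Z :=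
          closure_minimal (by rw [hLVZ]; exact Set.inter_subset_right) hZ hqL
        exact Set.mem_union_left _ (by rw [hLVZ]; exact ⟨hqV, hqZ⟩)

lemma MyCons.meets {F E : Set X} (hF : MyCons F) (hne : F.Nonempty)
    (hE : closure E = closure F) : (E ∩ F).Nonempty := by
  obtain ⟨U, hU, ⟨w, hwU, hwF⟩, hsub⟩ := hF.exists_open hne
  rw [← hE] at hwF
  obtain ⟨e, heU, heE⟩ := (mem_closure_iff.mp hwF) U hU hwU
  exact ⟨e, heE, hsub ⟨heU, hE ▸ subset_closure heE⟩⟩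

end Cons


/-- Semialgebraic subsets of ℂ^d, viewed as ℝ^{2d}: Boolean combinations of
sets defined by polynomial inequalities in the real and imaginary parts. -/
inductive SemialgebraicC {d : ℕ} : Set (Fin d → ℂ) → Prop
  | basic (p : MvPolynomial (Fin d ⊕ Fin d) ℝ) :
      SemialgebraicC {z | 0 < MvPolynomial.eval
        (Sum.elim (fun i => (z i).re) (fun i => (z i).im)) p}
  | compl {S : Set (Fin d → ℂ)} : SemialgebraicC S → SemialgebraicC Sᶜ
  | union {S T : Set (Fin d → ℂ)} :
      SemialgebraicC S → SemialgebraicC T → SemialgebraicC (S ∪ T)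

lemma semialgebraic_myCons {d : ℕ} {P : Set (Fin d → ℂ)} (h : SemialgebraicC P) :
    MyCons P := by
  induction h with
  | basic p =>
    refine MyLC.myCons (MyLC.of_isOpen ?_)
    have hc : Continuous fun z : Fin d → ℂ =>
        MvPolynomial.eval (Sum.elim (fun i => (z i).re) (fun i => (z i).im)) p := by
      refine (MvPolynomial.continuous_eval (p := p)).comp ?_
      refine continuous_pi fun j => ?_
      cases j with
      | inl i => exact Complex.continuous_re.comp (continuous_apply i)
      | inr i => exact Complex.continuous_im.comp (continuous_apply i)
    exact isOpen_lt continuous_const hc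
  | compl _ ih => exact ih.compl
  | union _ _ ih1 ih2 => exact ih1.union ih2

lemma closure_image_of_compact {X Y : Type*} [TopologicalSpace X] [TopologicalSpace Y]
    [T2Space Y] {f : X → Y} (hf : Continuous f) {s : Set X} (hs : IsCompact (closure s)) :
    closure (f '' s) = f '' closure s := by
  refine Set.Subset.antisymm ?_ (image_closure_subset_closure_image hf)
  exact closure_minimal (Set.image_mono subset_closure) (hs.image hf).isClosed

theorem stmt_17 {d : ℕ} (l : Fin d → ℂ) (hl : ∀ i, ‖l i‖ = 1)
    (A : Matrix (Fin d) (Fin d) ℂ) (hA : A = Matrix.diagonal l)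
    (T : Set (Matrix (Fin d) (Fin d) ℂ))
    (hT : T = {M | ∃ μ : Fin d → ℂ, M = Matrix.diagonal μ ∧
      (∀ i, ‖μ i‖ = 1) ∧
      ∀ v : Fin d → ℤ, (∏ i, l i ^ v i = 1) → ∏ i, μ i ^ v i = 1})
    (hdense : closure (Set.range fun n : ℕ => A ^ n) = T)
    (x y : Fin d → ℂ) (P : Set (Fin d → ℂ)) (hPsa : SemialgebraicC P)
    (hstab : A.mulVec '' P ⊆ P) (hx : x ∈ P) (hy : y ∉ P) :
    closure (Set.range fun n : ℕ => (A ^ n).mulVec x) ⊆ P ∧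
      y ∉ closure (Set.range fun n : ℕ => (A ^ n).mulVec x) := by
  classical
  set cmap : Matrix (Fin d) (Fin d) ℂ → Matrix (Fin d) (Fin d) ℂ :=
    fun M => M.map (starRingEnd ℂ) with hcmap
  have memT : ∀ μ : Fin d → ℂ, (∀ i, ‖μ i‖ = 1) →
      (∀ v : Fin d → ℤ, (∏ i, l i ^ v i = 1) → ∏ i, μ i ^ v i = 1) →
      Matrix.diagonal μ ∈ T := by
    intro μ h1 h2; rw [hT]; exact ⟨μ, rfl, h1, h2⟩
  have memT' : ∀ M ∈ T, ∃ μ : Fin d → ℂ, M = Matrix.diagonal μ ∧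
      (∀ i, ‖μ i‖ = 1) ∧
      ∀ v : Fin d → ℤ, (∏ i, l i ^ v i = 1) → ∏ i, μ i ^ v i = 1 := by
    intro M hM; rw [hT] at hM; exact hM
  have hmulT : ∀ M ∈ T, ∀ N ∈ T, M * N ∈ T := by
    intro M hM N hN
    obtain ⟨μ, rfl, hμ1, hμ2⟩ := memT' M hM
    obtain ⟨ν, rfl, hν1, hν2⟩ := memT' N hN
    rw [Matrix.diagonal_mul_diagonal]
    refine memT _ (fun i => by rw [norm_mul, hμ1, hν1, one_mul]) ?_
    intro v hv
    calc ∏ i, (μ * ν) i ^ v i = ∏ i, (μ i ^ v i * ν i ^ v i) :=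
          Finset.prod_congr rfl fun i _ => by rw [Pi.mul_apply, mul_zpow]
      _ = (∏ i, μ i ^ v i) * ∏ i, ν i ^ v i := Finset.prod_mul_distrib
      _ = 1 := by rw [hμ2 v hv, hν2 v hv, one_mul]
  have hconjT : ∀ M ∈ T, cmap M ∈ T := by
    intro M hM
    obtain ⟨μ, rfl, hμ1, hμ2⟩ := memT' M hM
    have : cmap (Matrix.diagonal μ) =
        Matrix.diagonal (fun i => (starRingEnd ℂ) (μ i)) :=
      Matrix.diagonal_map (map_zero _)
    rw [this]
    refine memT _ (fun i => by rw [Complex.norm_conj]; exact hμ1 i) ?_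
    intro v hv
    have hcp : ∏ i, (starRingEnd ℂ) (μ i) ^ v i = (starRingEnd ℂ) (∏ i, μ i ^ v i) := by
      rw [map_prod]
      exact Finset.prod_congr rfl fun i _ => (map_zpow₀ _ _ _).symm
    rw [hcp, hμ2 v hv, map_one]
  have hTclosed : IsClosed T := by rw [← hdense]; exact isClosed_closure
  have hTcomp : IsCompact T := by
    have hC : IsCompact {μ : Fin d → ℂ | ∀ i, ‖μ i‖ = 1} := by
      have hCeq : {μ : Fin d → ℂ | ∀ i, ‖μ i‖ = 1} =
          Set.pi Set.univ (fun _ => Metric.sphere (0 : ℂ) 1) := by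
        ext μ
        simp [Set.mem_pi, mem_sphere_zero_iff_norm]
      rw [hCeq]
      exact isCompact_univ_pi fun _ => isCompact_sphere 0 1
    refine IsCompact.of_isClosed_subset (hC.image continuous_id.matrix_diagonal)
      hTclosed ?_
    intro M hM
    obtain ⟨μ, rfl, hμ1, _⟩ := memT' M hM
    exact ⟨μ, hμ1, rfl⟩
  have himg : ∀ (w : Fin d → ℂ) (g : ℕ → Matrix (Fin d) (Fin d) ℂ),
      closure (Set.range g) = T →
      closure (Set.range fun n => (g n).mulVec w) = (fun M => M.mulVec w) '' T := by
    intro w g hg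
    have hcont : Continuous fun M : Matrix (Fin d) (Fin d) ℂ => M.mulVec w :=
      continuous_id.matrix_mulVec continuous_const
    have hco : (fun n => (g n).mulVec w) = (fun M => M.mulVec w) ∘ g := rfl
    rw [hco, Set.range_comp,
      closure_image_of_compact hcont (by rw [hg]; exact hTcomp), hg]
  set B : Matrix (Fin d) (Fin d) ℂ :=
    Matrix.diagonal (fun i => (starRingEnd ℂ) (l i)) with hB
  have hBpow : ∀ n : ℕ, B ^ n = cmap (A ^ n) := by
    intro n
    rw [hB, hA, Matrix.diagonal_pow, hcmap]
    simp only
    rw [Matrix.diagonal_pow, Matrix.diagonal_map (map_zero _)]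
    exact congrArg Matrix.diagonal (funext fun i => by simp [map_pow])
  have hcmapc : Continuous cmap :=
    continuous_id.matrix_map Complex.continuous_conj
  have hTB : closure (Set.range fun n : ℕ => B ^ n) = T := by
    have h1 : (fun n : ℕ => B ^ n) = cmap ∘ (fun n : ℕ => A ^ n) := funext hBpow
    rw [h1, Set.range_comp,
      closure_image_of_compact hcmapc (by rw [hdense]; exact hTcomp), hdense]
    apply Set.Subset.antisymm
    · rintro _ ⟨M, hM, rfl⟩; exact hconjT M hM
    · intro M hM
      refine ⟨cmap M, hconjT M hM, ?_⟩
      ext i j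
      simp [hcmap, Matrix.map_apply]
  have hstabn : ∀ n : ℕ, ∀ p ∈ P, (A ^ n).mulVec p ∈ P := by
    intro n
    induction n with
    | zero => intro p hp; rw [pow_zero, Matrix.one_mulVec]; exact hp
    | succ n ih =>
      intro p hp
      rw [pow_succ', ← Matrix.mulVec_mulVec]
      exact hstab ⟨_, ih p hp, rfl⟩
  have hinv : ∀ μ : Fin d → ℂ, (∀ i, ‖μ i‖ = 1) →
      Matrix.diagonal (fun i => (starRingEnd ℂ) (μ i)) * Matrix.diagonal μ = 1 := by
    intro μ hμ
    rw [Matrix.diagonal_mul_diagonal, ← Matrix.diagonal_one]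
    refine congrArg Matrix.diagonal (funext fun i => ?_)
    show (starRingEnd ℂ) (μ i) * μ i = 1
    rw [mul_comm, Complex.mul_conj, Complex.normSq_eq_norm_sq, hμ i]
    norm_num
  have hABn : ∀ n : ℕ, (A ^ n) * (B ^ n) = 1 := by
    intro n
    rw [hA, hB, Matrix.diagonal_pow, Matrix.diagonal_pow, Matrix.diagonal_mul_diagonal,
      ← Matrix.diagonal_one]
    refine congrArg Matrix.diagonal (funext fun i => ?_)
    have h1 : l i * (starRingEnd ℂ) (l i) = 1 := by
      rw [Complex.mul_conj, Complex.normSq_eq_norm_sq, hl i]; norm_num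
    show (l ^ n) i * ((fun i => (starRingEnd ℂ) (l i)) ^ n) i = 1
    rw [Pi.pow_apply, Pi.pow_apply, ← mul_pow, h1, one_pow]
  have hKint : closure (Set.range fun n : ℕ => (A ^ n).mulVec x) =
      (fun M => M.mulVec x) '' T := himg x _ hdense
  have hKP : closure (Set.range fun n : ℕ => (A ^ n).mulVec x) ⊆ P := by
    intro z hzK
    by_contra hzP
    have hzK' : z ∈ (fun M => M.mulVec x) '' T := by rw [← hKint]; exact hzK
    obtain ⟨M, hMT, hMz'⟩ := hzK'
    have hMz : M.mulVec x = z := hMz'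
    have hE : closure (Set.range fun n : ℕ => (B ^ n).mulVec z) =
        (fun M => M.mulVec z) '' T := himg z _ hTB
    obtain ⟨μ, hMdiag, hμ1, hμ2⟩ := memT' M hMT
    have hMcT : Matrix.diagonal (fun i => (starRingEnd ℂ) (μ i)) ∈ T := by
      have h := hconjT M hMT
      have h2 : cmap (Matrix.diagonal μ) =
          Matrix.diagonal (fun i => (starRingEnd ℂ) (μ i)) :=
        Matrix.diagonal_map (map_zero _)
      rwa [hMdiag, h2] at h
    have hzx : (fun M => M.mulVec z) '' T = (fun M => M.mulVec x) '' T := by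
      apply Set.Subset.antisymm
      · rintro _ ⟨N, hN, rfl⟩
        refine ⟨N * M, hmulT N hN M hMT, ?_⟩
        show (N * M).mulVec x = N.mulVec z
        rw [← Matrix.mulVec_mulVec, hMz]
      · rintro _ ⟨N, hN, rfl⟩
        refine ⟨N * Matrix.diagonal (fun i => (starRingEnd ℂ) (μ i)),
          hmulT N hN _ hMcT, ?_⟩
        show (N * _).mulVec z = N.mulVec x
        rw [← hMz, hMdiag, Matrix.mulVec_mulVec, mul_assoc, hinv μ hμ1, mul_one]
    have hOP : Set.range (fun n : ℕ => (A ^ n).mulVec x) ⊆ P := by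
      rintro _ ⟨n, rfl⟩; exact hstabn n x hx
    have hxO : x ∈ Set.range (fun n : ℕ => (A ^ n).mulVec x) :=
      ⟨0, by show (A ^ 0).mulVec x = x; rw [pow_zero, Matrix.one_mulVec]⟩
    set K := closure (Set.range fun n : ℕ => (A ^ n).mulVec x) with hK
    have hFcons : MyCons (P ∩ K) :=
      (semialgebraic_myCons hPsa).inter (MyLC.of_isClosed isClosed_closure).myCons
    have hFne : (P ∩ K).Nonempty := ⟨x, hx, subset_closure hxO⟩
    have hclF : closure (P ∩ K) = K := by
      apply Set.Subset.antisymm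
      · exact closure_minimal Set.inter_subset_right isClosed_closure
      · exact closure_mono fun w hw => ⟨hOP hw, subset_closure hw⟩
    have hclE : closure (Set.range fun n : ℕ => (B ^ n).mulVec z) =
        closure (P ∩ K) := by rw [hE, hzx, ← hKint]; exact hclF.symm
    obtain ⟨e, heE, heP, _⟩ := hFcons.meets hFne hclE
    obtain ⟨n, rfl⟩ := heE
    have hz : z = (A ^ n).mulVec ((B ^ n).mulVec z) := by
      rw [Matrix.mulVec_mulVec, hABn n, Matrix.one_mulVec]
    exact hzP (hz ▸ hstabn n _ heP)
  exact ⟨hKP, fun h => hy (hKP h)⟩
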